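/- Let $A$ be an admissible ring whose topology has the descending chain of open ideals $\{I_i\}_{i\in\mathbb{N}}$ as a basis of neighborhoods of $0$. If $\mathfrak{p}$ is an open prime ideal of $A$ and $S = A \setminus \mathfrak{p}$, then the natural map from the localization-type stalk $A_{\{S\}} := \varinjlim_{x \notin \mathfrak{p}} A_{\{x\}}$ (where $A_{\{x\}} = \varprojlim (A/I_i)_x$ is the complete localization) to its completion $A\{S^{-1}\} := \varprojlim (A/I_i)_{\mathfrak{p}/I_i}$ is a local homomorphism of local rings; in particular both rings are local. -/

import Mathlib

open Filter Topology

/-- The descending chain `I` of ideals is a basis of neighborhoods of `0`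
(this is the `{Iᵢ}`-topology). -/
def IsChainBasis (A : Type*) [CommRing A] [TopologicalSpace A] (I : ℕ → Ideal A) : Prop :=
  Antitone I ∧ ∀ s : Set A, s ∈ nhds (0 : A) ↔ ∃ i, (I i : Set A) ⊆ s

/-- An ideal of definition: an open ideal all of whose elements are topologically nilpotent. -/
def IsIdealOfDefinition (A : Type*) [CommRing A] [TopologicalSpace A] (J : Ideal A) : Prop :=
  IsOpen (J : Set A) ∧ ∀ x ∈ J, Filter.Tendsto (fun n => x ^ n) Filter.atTop (nhds (0 : A))

/-- An admissible ring: a topological ring, linearly topologized with a countable chain of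
ideals as a basis of neighborhoods of `0`, separated, complete, admitting an ideal of
definition. -/
structure IsAdmissible (A : Type*) [CommRing A] [TopologicalSpace A] : Prop where
  topRing : IsTopologicalRing A
  exists_chain : ∃ I : ℕ → Ideal A, IsChainBasis A I
  separated : ∀ x : A, (∀ U ∈ nhds (0 : A), x ∈ U) → x = 0
  complete : ∀ f : ℕ → A,
    (∀ U ∈ nhds (0 : A), ∃ N, ∀ m ≥ N, ∀ n ≥ N, f m - f n ∈ U) →
    ∃ a : A, ∀ U ∈ nhds (0 : A), ∃ N, ∀ n ≥ N, a - f n ∈ U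
  exists_idealOfDef : ∃ J : Ideal A, IsIdealOfDefinition A J

/-- The topology of `A` is the `J`-adic topology: the powers `J ^ n` form a basis of
neighborhoods of `0`. -/
def IsAdicTopology (A : Type*) [CommRing A] [TopologicalSpace A] (J : Ideal A) : Prop :=
  ∀ s : Set A, s ∈ nhds (0 : A) ↔ ∃ n : ℕ, ((J ^ n : Ideal A) : Set A) ⊆ s

section Stalks

variable {A : Type*} [CommRing A] (I : ℕ → Ideal A) (hdesc : ∀ i, I (i + 1) ≤ I i)

/-- Level-`i` piece of the complete localization of `A` by `x`: `(A/Iᵢ)_x`. -/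
noncomputable abbrev levelLoc (x : A) (i : ℕ) : Type _ :=
  Localization.Away (Ideal.Quotient.mk (I i) x)

/-- Transition map `(A/Iᵢ₊₁)_x → (A/Iᵢ)_x`. -/
noncomputable def levelLocTrans (x : A) (i : ℕ) :
    levelLoc I x (i + 1) →+* levelLoc I x i :=
  Localization.awayLift
    ((algebraMap (A ⧸ I i) (Localization.Away (Ideal.Quotient.mk (I i) x))).comp
      (Ideal.Quotient.factor (hdesc i)))
    (Ideal.Quotient.mk (I (i + 1)) x)
    (by rw [RingHom.comp_apply, Ideal.Quotient.factor_mk]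
        exact IsLocalization.Away.algebraMap_isUnit _)

/-- The complete localization `A_{x} = varprojlim (A/Iᵢ)_x`. -/
noncomputable def completeLoc (x : A) : Subring (∀ i, levelLoc I x i) where
  carrier := {g | ∀ i, levelLocTrans I hdesc x i (g (i + 1)) = g i}
  zero_mem' := by intro i; simp
  one_mem' := by intro i; simp
  add_mem' := by intro a b ha hb i; simp [map_add, ha i, hb i]
  mul_mem' := by intro a b ha hb i; simp [map_mul, ha i, hb i]
  neg_mem' := by intro a ha i; simp [map_neg, ha i]

end Stalks

section Stalks2

variable {A : Type*} [CommRing A] (I : ℕ → Ideal A) (hdesc : ∀ i, I (i + 1) ≤ I i)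
  (p : Ideal A)

/-- The index set `S = A ∖ p`, preordered by divisibility. -/
def stalkIndex : Type _ := {x : A // x ∉ p}

instance : Preorder (stalkIndex p) where
  le x y := (x.1 : A) ∣ y.1
  le_refl x := dvd_refl _
  le_trans _ _ _ h h' := dvd_trans h h'

/-- The map `(A/Iᵢ)_x → (A/Iᵢ)_y` for `x ∣ y`. -/
noncomputable def levelLocMap (x y : A) (hxy : x ∣ y) (i : ℕ) :
    levelLoc I x i →+* levelLoc I y i :=
  Localization.awayLift
    (algebraMap (A ⧸ I i) (Localization.Away (Ideal.Quotient.mk (I i) y)))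
    (Ideal.Quotient.mk (I i) x)
    (isUnit_of_dvd_unit (map_dvd _ (map_dvd _ hxy))
      (IsLocalization.Away.algebraMap_isUnit _))

/-- The transition map `A_{x} → A_{y}` of complete localizations, for `x ∣ y`. -/
noncomputable def completeLocMap (x y : A) (hxy : x ∣ y) :
    completeLoc I hdesc x →+* completeLoc I hdesc y :=
  RingHom.codRestrict
    ((Pi.ringHom fun i => (levelLocMap I x y hxy i).comp
        (Pi.evalRingHom (levelLoc I x) i)).comp (Subring.subtype _))
    _
    (fun g i => by
      have hsq : (levelLocTrans I hdesc y i).comp (levelLocMap I x y hxy (i + 1)) =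
          (levelLocMap I x y hxy i).comp (levelLocTrans I hdesc x i) := by
        refine IsLocalization.ringHom_ext
          (Submonoid.powers (Ideal.Quotient.mk (I (i + 1)) x)) ?_
        ext a
        simp [levelLocTrans, levelLocMap, Localization.awayLift,
          IsLocalization.Away.lift, IsLocalization.lift_eq]
      have hg := g.2 i
      have := congrArg (fun h : levelLoc I x (i + 1) →+* levelLoc I y i => h (g.1 (i + 1)))
        hsq
      exact this.trans (congrArg (levelLocMap I x y hxy i)
        (g.2 i : levelLocTrans I hdesc x i (g.1 (i + 1)) = g.1 i)))

end Stalks2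

section Stalks3

variable {A : Type*} [CommRing A] (I : ℕ → Ideal A) (hdesc : ∀ i, I (i + 1) ≤ I i)
  (p : Ideal A) [hp : p.IsPrime]

/-- Level-`i` piece of the completed stalk `A{S⁻¹}`: the localization of `A/Iᵢ` at the
image of `S = A ∖ p`. -/
noncomputable abbrev pLev (i : ℕ) : Type _ :=
  Localization ((p.primeCompl).map (Ideal.Quotient.mk (I i)))

/-- Transition map `(A/Iᵢ₊₁)_{p/Iᵢ₊₁} → (A/Iᵢ)_{p/Iᵢ}`. -/
noncomputable def pTrans (i : ℕ) : pLev I p (i + 1) →+* pLev I p i :=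
  IsLocalization.lift (M := (p.primeCompl).map (Ideal.Quotient.mk (I (i + 1))))
    (g := (algebraMap (A ⧸ I i) (pLev I p i)).comp
      (Ideal.Quotient.factor (hdesc i)))
    (fun y => by
      obtain ⟨s, hs, hy⟩ := y.2
      rw [RingHom.comp_apply]
      have h : Ideal.Quotient.factor (hdesc i) y.1 =
          Ideal.Quotient.mk (I i) s := by
        rw [← hy, Ideal.Quotient.factor_mk]
      rw [h]
      exact IsLocalization.map_units _
        ⟨Ideal.Quotient.mk (I i) s, Submonoid.mem_map_of_mem _ hs⟩)

/-- The fine stalk `A{S⁻¹} = varprojlim (A/Iᵢ)_{p/Iᵢ}`. -/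
noncomputable def pLim : Subring (∀ i, pLev I p i) where
  carrier := {g | ∀ i, pTrans I hdesc p i (g (i + 1)) = g i}
  zero_mem' := by intro i; simp
  one_mem' := by intro i; simp
  add_mem' := by intro a b ha hb i; simp [map_add, ha i, hb i]
  mul_mem' := by intro a b ha hb i; simp [map_mul, ha i, hb i]
  neg_mem' := by intro a ha i; simp [map_neg, ha i]

/-- Level-`i` canonical map `(A/Iᵢ)_x → (A/Iᵢ)_{p/Iᵢ}` for `x ∉ p`. -/
noncomputable def canLev (x : A) (hx : x ∈ p.primeCompl) (i : ℕ) :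
    levelLoc I x i →+* pLev I p i :=
  Localization.awayLift (algebraMap (A ⧸ I i) (pLev I p i)) (Ideal.Quotient.mk (I i) x)
    (IsLocalization.map_units _
      ⟨Ideal.Quotient.mk (I i) x, Submonoid.mem_map_of_mem _ hx⟩)

/-- The canonical map `A_{x} → A{S⁻¹}` for `x ∉ p`. -/
noncomputable def canMap (x : A) (hx : x ∈ p.primeCompl) :
    completeLoc I hdesc x →+* pLim I hdesc p :=
  RingHom.codRestrict
    ((Pi.ringHom fun i => (canLev I p x hx i).comp
        (Pi.evalRingHom (levelLoc I x) i)).comp (Subring.subtype _))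
    _
    (fun g i => by
      have hsq : (pTrans I hdesc p i).comp (canLev I p x hx (i + 1)) =
          (canLev I p x hx i).comp (levelLocTrans I hdesc x i) := by
        refine IsLocalization.ringHom_ext
          (Submonoid.powers (Ideal.Quotient.mk (I (i + 1)) x)) ?_
        ext a
        simp [pTrans, canLev, levelLocTrans, Localization.awayLift,
          IsLocalization.Away.lift, IsLocalization.lift_eq]
      have hg := g.2 i
      have := congrArg (fun h : levelLoc I x (i + 1) →+* pLev I p i => h (g.1 (i + 1))) hsq
      exact this.trans (congrArg (canLev I p x hx i)
        (g.2 i : levelLocTrans I hdesc x i (g.1 (i + 1)) = g.1 i)))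

end Stalks3

section TowerAux

variable {R : ℕ → Type*} [∀ i, CommRing (R i)] (f : ∀ i, R (i + 1) →+* R i)

theorem tower_down {g : ∀ i, R i} (hg : ∀ i, f i (g (i + 1)) = g i)
    {i j : ℕ} (hij : i ≤ j) : IsUnit (g j) → IsUnit (g i) := by
  induction j, hij using Nat.le_induction with
  | base => exact id
  | succ n hn ih => exact fun h => ih (hg n ▸ h.map (f n))

theorem tower_up {g : ∀ i, R i} (hg : ∀ i, f i (g (i + 1)) = g i) (i0 : ℕ)
    (hrefl : ∀ i, i0 ≤ i → ∀ z : R (i + 1), IsUnit (f i z) → IsUnit z)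
    (h : IsUnit (g i0)) : ∀ i, IsUnit (g i) := by
  have hup : ∀ k, IsUnit (g (i0 + k)) := by
    intro k
    induction k with
    | zero => exact h
    | succ k ih =>
      exact hrefl (i0 + k) (Nat.le_add_right _ _) (g (i0 + k + 1)) (by rw [hg]; exact ih)
  intro i
  rcases le_or_gt i i0 with h' | h'
  · exact tower_down f hg h' h
  · obtain ⟨k, rfl⟩ := Nat.exists_eq_add_of_le h'.le
    exact hup k

theorem tower_isUnit_iff (S : Subring (∀ i, R i))
    (hS : ∀ h : ∀ i, R i, h ∈ S ↔ ∀ i, f i (h (i + 1)) = h i) (g : S) :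
    IsUnit g ↔ ∀ i, IsUnit (g.1 i) := by
  constructor
  · exact fun h i => h.map ((Pi.evalRingHom R i).comp S.subtype)
  · intro h
    have hg : ∀ i, f i (g.1 (i + 1)) = g.1 i := (hS g.1).mp g.2
    refine IsUnit.of_mul_eq_one (a := g) ⟨fun i => ↑(h i).unit⁻¹, (hS _).mpr fun i => ?_⟩
      (Subtype.ext (funext fun i => (h i).mul_val_inv))
    have h1 : g.1 i * f i (↑(h (i + 1)).unit⁻¹) = 1 := by
      rw [← hg i, ← map_mul, (h (i + 1)).mul_val_inv, map_one]
    exact (h i).mul_left_cancel (h1.trans (h i).mul_val_inv.symm)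

end TowerAux

theorem nilp_of_mul_unit {T : Type*} [CommRing T] {z s : T} (hs : IsUnit s)
    (h : IsNilpotent (z * s)) : IsNilpotent z := by
  obtain ⟨n, hn⟩ := h
  obtain ⟨v, hv⟩ := (hs.pow n).exists_right_inv
  refine ⟨n, ?_⟩
  calc z ^ n = z ^ n * (s ^ n * v) := by rw [hv, mul_one]
    _ = (z * s) ^ n * v := by ring
    _ = 0 := by rw [hn, zero_mul]

theorem reflect_of_surj {R T : Type*} [CommRing R] [CommRing T] (F : R →+* T)
    (hs : Function.Surjective F) (hk : ∀ z, F z = 0 → IsNilpotent z)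
    {r : R} (h : IsUnit (F r)) : IsUnit r := by
  obtain ⟨s, hs'⟩ := hs ↑h.unit⁻¹
  have h1 : F (r * s) = 1 := by
    rw [map_mul, hs']
    exact h.mul_val_inv
  have h2 : IsNilpotent (1 - r * s) := hk _ (by rw [map_sub, map_one, h1, sub_self])
  have h3 : IsUnit (r * s) := by simpa using h2.isUnit_one_sub
  exact isUnit_of_mul_isUnit_left h3

theorem loc_lift_reflect {B' B : Type*} [CommRing B'] [CommRing B] (φ : B' →+* B)
    (hφ : Function.Surjective φ) (M' : Submonoid B') (M : Submonoid B)
    (hM : ∀ t ∈ M, ∃ t' ∈ M', φ t' = t)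
    (hker : ∀ b', φ b' = 0 → IsNilpotent b')
    (F : Localization M' →+* Localization M)
    (hcomp : ∀ b', F (algebraMap B' (Localization M') b') =
      algebraMap B (Localization M) (φ b')) :
    ∀ z : Localization M', IsUnit (F z) → IsUnit z := by
  have hkey : ∀ (b' : B') (t' : M'),
      F (IsLocalization.mk' (Localization M') b' t') *
        algebraMap B (Localization M) (φ ↑t') = algebraMap B (Localization M) (φ b') := by
    intro b' t'
    rw [← hcomp, ← hcomp, ← map_mul, IsLocalization.mk'_spec]
  have hsurj : Function.Surjective F := by
    intro w
    obtain ⟨⟨b, t⟩, rfl⟩ := IsLocalization.mk'_surjective M w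
    obtain ⟨b', rfl⟩ := hφ b
    obtain ⟨t', ht', htt⟩ := hM t t.2
    refine ⟨IsLocalization.mk' _ b' ⟨t', ht'⟩, ?_⟩
    have h1 := hkey b' ⟨t', ht'⟩
    rw [show φ ↑(⟨t', ht'⟩ : M') = ↑t from htt] at h1
    have h2 : IsLocalization.mk' (Localization M) (φ b') t *
        algebraMap B (Localization M) ↑t = algebraMap B (Localization M) (φ b') :=
      IsLocalization.mk'_spec _ _ _
    exact (IsLocalization.map_units (Localization M) t).mul_right_cancel (h1.trans h2.symm)
  intro z hz
  refine reflect_of_surj F hsurj ?_ hz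
  intro z' hz'
  obtain ⟨⟨b', t'⟩, rfl⟩ := IsLocalization.mk'_surjective M' z'
  have h1 := hkey b' t'
  rw [hz', zero_mul] at h1
  obtain ⟨m, hm⟩ := (IsLocalization.map_eq_zero_iff M (Localization M) (φ b')).mp h1.symm
  obtain ⟨u', hu', huu⟩ := hM ↑m m.2
  have hnil : IsNilpotent (u' * b') := hker _ (by rw [map_mul, huu, hm])
  have hnil2 : IsNilpotent ((algebraMap B' (Localization M')) (u' * b')) :=
    hnil.map (algebraMap B' (Localization M'))
  have h2 : IsLocalization.mk' (Localization M') b' t' *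
      algebraMap B' (Localization M') (↑t' * u') =
      algebraMap B' (Localization M') (u' * b') := by
    rw [map_mul, ← mul_assoc, IsLocalization.mk'_spec, ← map_mul, mul_comm]
  have hu2 : IsUnit (algebraMap B' (Localization M') (↑t' * u')) := by
    rw [map_mul]
    exact (IsLocalization.map_units (Localization M') t').mul
      (IsLocalization.map_units (Localization M') ⟨u', hu'⟩)
  refine nilp_of_mul_unit hu2 ?_
  rw [h2]
  exact hnil2

instance stalkIndex.instNonempty {A : Type*} [CommRing A] (p : Ideal A) [hp : p.IsPrime] :
    Nonempty (stalkIndex p) :=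
  ⟨⟨1, fun h => hp.ne_top ((Ideal.eq_top_iff_one p).mpr h)⟩⟩

instance stalkIndex.instIsDirected {A : Type*} [CommRing A] (p : Ideal A) [hp : p.IsPrime] :
    IsDirected (stalkIndex p) (· ≤ ·) :=
  ⟨fun x y => ⟨⟨x.1 * y.1, fun h => ((hp.mem_or_mem h).elim x.2 y.2)⟩,
    dvd_mul_right _ _, dvd_mul_left _ _⟩⟩

set_option maxHeartbeats 1600000 in
set_option synthInstance.maxHeartbeats 400000 in
/-- For an admissible ring `A` with chain basis `{Iᵢ}` and an open prime ideal `p` with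
complement `S`, the stalk `A_{S} = varinjlim_{x ∉ p} A_{x}` and its completion
`A{S⁻¹} = varprojlim (A/Iᵢ)_{p/Iᵢ}` are local rings, and the natural map between them
(i.e. any ring homomorphism commuting with the canonical maps from the `A_{x}`) is a local
homomorphism. -/
theorem stmt_15 (A : Type*) [CommRing A] [TopologicalSpace A] (hA : IsAdmissible A)
    (I : ℕ → Ideal A) (hbasis : IsChainBasis A I) (hdesc : ∀ i, I (i + 1) ≤ I i)
    (p : Ideal A) [hp : p.IsPrime] (hpopen : IsOpen (p : Set A)) :
    IsLocalRing (Ring.DirectLimit (fun x : stalkIndex p => completeLoc I hdesc x.1)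
      (fun x y hxy => completeLocMap I hdesc x.1 y.1 hxy)) ∧
    IsLocalRing (pLim I hdesc p) ∧
    ∀ ψ : Ring.DirectLimit (fun x : stalkIndex p => completeLoc I hdesc x.1)
        (fun x y hxy => completeLocMap I hdesc x.1 y.1 hxy) →+* pLim I hdesc p,
      (∀ x : stalkIndex p,
        ψ.comp (Ring.DirectLimit.of (fun x : stalkIndex p => completeLoc I hdesc x.1)
          (fun x y hxy => completeLocMap I hdesc x.1 y.1 hxy) x) = canMap I hdesc p x.1 x.2) →
      IsLocalHom ψ := by
  classical
  obtain ⟨J, hJopen, hJnil⟩ := hA.exists_idealOfDef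
  obtain ⟨j1, hj1⟩ := (hbasis.2 J).mp (hJopen.mem_nhds J.zero_mem)
  obtain ⟨j2, hj2⟩ := (hbasis.2 p).mp (hpopen.mem_nhds p.zero_mem)
  set i0 := max j1 j2 with hi0def
  have hi0J : ∀ a ∈ I i0, a ∈ J := fun a ha => hj1 (hbasis.1 (le_max_left j1 j2) ha)
  have hi0p : I i0 ≤ p := fun a ha => hj2 (hbasis.1 (le_max_right j1 j2) ha)
  -- elements of `I i` (`i ≥ i0`) are nilpotent in every quotient
  have hnilp : ∀ i, i0 ≤ i → ∀ w ∈ I i, ∀ j, IsNilpotent (Ideal.Quotient.mk (I j) w) := by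
    intro i hi w hw j
    have hwJ : w ∈ J := hi0J w (hbasis.1 hi hw)
    have htend := hJnil w hwJ
    have hIj : (I j : Set A) ∈ nhds (0 : A) := (hbasis.2 _).mpr ⟨j, subset_rfl⟩
    obtain ⟨N, hN⟩ := Filter.mem_atTop_sets.mp (htend hIj)
    exact ⟨N, by rw [← map_pow, Ideal.Quotient.eq_zero_iff_mem]; exact hN N le_rfl⟩
  have hfac_surj : ∀ i, Function.Surjective
      (Ideal.Quotient.factor (hdesc i)) := by
    intro i b
    obtain ⟨a, rfl⟩ := Ideal.Quotient.mk_surjective b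
    exact ⟨Ideal.Quotient.mk _ a, Ideal.Quotient.factor_mk _ _⟩
  have hfac_ker : ∀ i, i0 ≤ i → ∀ b' : A ⧸ I (i + 1),
      Ideal.Quotient.factor (hdesc i) b' = 0 → IsNilpotent b' := by
    intro i hi b' hb'
    obtain ⟨w, rfl⟩ := Ideal.Quotient.mk_surjective b'
    rw [Ideal.Quotient.factor_mk, Ideal.Quotient.eq_zero_iff_mem] at hb'
    exact hnilp i hi w hb' (i + 1)
  -- the various maps commute with the algebra maps
  have hcompT : ∀ (x : A) (i : ℕ) (b : A ⧸ I (i + 1)),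
      levelLocTrans I hdesc x i (algebraMap _ (levelLoc I x (i + 1)) b) =
        algebraMap _ (levelLoc I x i) (Ideal.Quotient.factor (hdesc i) b) := by
    intro x i b
    simp [levelLocTrans, Localization.awayLift, IsLocalization.Away.lift,
      IsLocalization.lift_eq]
  have hcompP : ∀ (i : ℕ) (b : A ⧸ I (i + 1)),
      pTrans I hdesc p i (algebraMap _ (pLev I p (i + 1)) b) =
        algebraMap _ (pLev I p i) (Ideal.Quotient.factor (hdesc i) b) := by
    intro i b
    simp [pTrans, IsLocalization.lift_eq]
  have hcompC : ∀ (x : A) (hx : x ∉ p) (i : ℕ) (b : A ⧸ I i),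
      canLev I p x hx i (algebraMap _ (levelLoc I x i) b) = algebraMap _ (pLev I p i) b := by
    intro x hx i b
    simp [canLev, Localization.awayLift, IsLocalization.Away.lift, IsLocalization.lift_eq]
  have hcompM : ∀ (x y : A) (hxy : x ∣ y) (i : ℕ) (b : A ⧸ I i),
      levelLocMap I x y hxy i (algebraMap _ (levelLoc I x i) b) =
        algebraMap _ (levelLoc I y i) b := by
    intro x y hxy i b
    simp [levelLocMap, Localization.awayLift, IsLocalization.Away.lift,
      IsLocalization.lift_eq]
  -- unit reflection along the transition maps
  have hreflT : ∀ (x : A) (i : ℕ), i0 ≤ i → ∀ z : levelLoc I x (i + 1),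
      IsUnit (levelLocTrans I hdesc x i z) → IsUnit z := by
    intro x i hi
    refine loc_lift_reflect _ (hfac_surj i) _ _ ?_ (hfac_ker i hi) _ (hcompT x i)
    rintro t ⟨n, rfl⟩
    exact ⟨(Ideal.Quotient.mk (I (i + 1)) x) ^ n, ⟨n, rfl⟩,
      by rw [map_pow, Ideal.Quotient.factor_mk]⟩
  have hreflP : ∀ i : ℕ, i0 ≤ i → ∀ z : pLev I p (i + 1),
      IsUnit (pTrans I hdesc p i z) → IsUnit z := by
    intro i hi
    refine loc_lift_reflect _ (hfac_surj i) _ _ ?_ (hfac_ker i hi) _ (hcompP i)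
    rintro t ⟨s, hs, rfl⟩
    exact ⟨Ideal.Quotient.mk (I (i + 1)) s, Submonoid.mem_map_of_mem _ hs,
      Ideal.Quotient.factor_mk _ _⟩
  -- the level-`i0` piece of the completed stalk is local
  set q : Ideal (A ⧸ I i0) := p.map (Ideal.Quotient.mk (I i0)) with hqdef
  haveI hq : q.IsPrime := Ideal.map_isPrime_of_surjective Ideal.Quotient.mk_surjective
    (by rw [Ideal.mk_ker]; exact hi0p)
  have hMq : Submonoid.map (Ideal.Quotient.mk (I i0)) p.primeCompl = q.primeCompl := by
    ext b
    constructor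
    · rintro ⟨s, hs, rfl⟩
      exact fun hmem => hs ((Ideal.mem_quotient_iff_mem hi0p).mp hmem)
    · intro hb
      obtain ⟨a, rfl⟩ := Ideal.Quotient.mk_surjective b
      exact ⟨a, fun ha => hb (Ideal.mem_map_of_mem _ ha), rfl⟩
  haveI hlocLev : IsLocalRing (pLev I p i0) := by
    show IsLocalRing (Localization (Submonoid.map (Ideal.Quotient.mk (I i0)) p.primeCompl))
    rw [hMq]
    exact Localization.AtPrime.isLocalRing q
  haveI hqloc : IsLocalization.AtPrime (pLev I p i0) q := by
    show IsLocalization q.primeCompl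
      (Localization (Submonoid.map (Ideal.Quotient.mk (I i0)) p.primeCompl))
    rw [← hMq]
    exact Localization.isLocalization
  -- the key step: a section whose level-`i0` germ at `p` is a unit is a unit in the stalk
  have key : ∀ (x : A) (hx : x ∉ p) (g : completeLoc I hdesc x),
      IsUnit (canLev I p x hx i0 (g.1 i0)) →
      IsUnit (Ring.DirectLimit.of (fun x : stalkIndex p => completeLoc I hdesc x.1)
        (fun x y hxy => completeLocMap I hdesc x.1 y.1 hxy) ⟨x, hx⟩ g) := by
    intro x hx g hu
    obtain ⟨⟨a, s⟩, hsurj⟩ :=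
      IsLocalization.surj (Submonoid.powers (Ideal.Quotient.mk (I i0) x)) (g.1 i0)
    obtain ⟨n, hn⟩ := s.2
    have hs_unit : IsUnit (algebraMap (A ⧸ I i0) (pLev I p i0) ↑s) := by
      refine IsLocalization.map_units (M := Submonoid.map (Ideal.Quotient.mk (I i0))
        p.primeCompl) _ ⟨↑s, ?_⟩
      rw [← hn]
      exact pow_mem (Submonoid.mem_map_of_mem _ hx) n
    have ha_unit : IsUnit (algebraMap (A ⧸ I i0) (pLev I p i0) a) := by
      have h1 := congrArg (canLev I p x hx i0) hsurj
      rw [map_mul, hcompC x hx i0, hcompC x hx i0] at h1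
      rw [← h1]
      exact hu.mul hs_unit
    have haq : a ∈ q.primeCompl :=
      (IsLocalization.AtPrime.isUnit_to_map_iff (pLev I p i0) q a).mp ha_unit
    obtain ⟨a', rfl⟩ := Ideal.Quotient.mk_surjective a
    have ha' : a' ∉ p := fun h => haq (Ideal.mem_map_of_mem _ h)
    have hy : x * a' ∉ p := fun h => (hp.mem_or_mem h).elim hx ha'
    have hxy : x ∣ x * a' := dvd_mul_right _ _
    have hg'i0 : IsUnit ((completeLocMap I hdesc x (x * a') hxy g).1 i0) := by
      have h2 := congrArg (levelLocMap I x (x * a') hxy i0) hsurj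
      rw [map_mul, hcompM x (x * a') hxy i0, hcompM x (x * a') hxy i0] at h2
      have hyunit : IsUnit (algebraMap _ (levelLoc I (x * a') i0)
          (Ideal.Quotient.mk (I i0) (x * a'))) :=
        IsLocalization.map_units (M := Submonoid.powers (Ideal.Quotient.mk (I i0) (x * a'))) _
          ⟨_, Submonoid.mem_powers _⟩
      have hyunit2 : IsUnit ((algebraMap _ (levelLoc I (x * a') i0))
          (Ideal.Quotient.mk (I i0) x) * (algebraMap _ (levelLoc I (x * a') i0))
          (Ideal.Quotient.mk (I i0) a')) := by
        rw [← map_mul, ← map_mul]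
        exact hyunit
      have hxa1 : IsUnit (algebraMap _ (levelLoc I (x * a') i0) (Ideal.Quotient.mk (I i0) x)) :=
        isUnit_of_mul_isUnit_left hyunit2
      have hxa2 : IsUnit (algebraMap _ (levelLoc I (x * a') i0) (Ideal.Quotient.mk (I i0) a')) :=
        isUnit_of_mul_isUnit_right hyunit2
      have hsu : IsUnit ((algebraMap _ (levelLoc I (x * a') i0)) (↑s : A ⧸ I i0)) := by
        rw [← hn, map_pow]
        exact hxa1.pow n
      have h3 : IsUnit ((completeLocMap I hdesc x (x * a') hxy g).1 i0 *
          algebraMap _ (levelLoc I (x * a') i0) (↑s : A ⧸ I i0)) := by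
        rw [show (completeLocMap I hdesc x (x * a') hxy g).1 i0 =
          levelLocMap I x (x * a') hxy i0 (g.1 i0) from rfl, h2]
        exact hxa2
      exact isUnit_of_mul_isUnit_left h3
    have hall : ∀ i, IsUnit ((completeLocMap I hdesc x (x * a') hxy g).1 i) :=
      tower_up (levelLocTrans I hdesc (x * a'))
        (completeLocMap I hdesc x (x * a') hxy g).2 i0 (hreflT (x * a')) hg'i0
    have hg'unit : IsUnit (completeLocMap I hdesc x (x * a') hxy g) :=
      (tower_isUnit_iff (levelLocTrans I hdesc (x * a')) (completeLoc I hdesc (x * a'))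
        (fun _ => Iff.rfl) _).mpr hall
    have h5 := hg'unit.map (Ring.DirectLimit.of (fun x : stalkIndex p => completeLoc I hdesc x.1)
      (fun x y hxy => completeLocMap I hdesc x.1 y.1 hxy) ⟨x * a', hy⟩)
    rwa [Ring.DirectLimit.of_f (G := fun x : stalkIndex p => ↥(completeLoc I hdesc x.1))
      (f := fun x y hxy => completeLocMap I hdesc x.1 y.1 hxy)
      (i := ⟨x, hx⟩) (j := ⟨x * a', hy⟩) (hij := hxy) (x := g)] at h5
  -- compatibility of the canonical maps
  have hcan_compat : ∀ (x y : stalkIndex p) (hxy : x ≤ y) (g : completeLoc I hdesc x.1),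
      canMap I hdesc p y.1 y.2 (completeLocMap I hdesc x.1 y.1 hxy g) =
        canMap I hdesc p x.1 x.2 g := by
    intro x y hxy g
    refine Subtype.ext (funext fun i => ?_)
    have hhom : (canLev I p y.1 y.2 i).comp (levelLocMap I x.1 y.1 hxy i) =
        canLev I p x.1 x.2 i := by
      refine IsLocalization.ringHom_ext (Submonoid.powers (Ideal.Quotient.mk (I i) x.1)) ?_
      ext a
      simp [canLev, levelLocMap, Localization.awayLift, IsLocalization.Away.lift,
        IsLocalization.lift_eq]
    exact congrArg (fun h : levelLoc I x.1 i →+* pLev I p i => h (g.1 i)) hhom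
  have hPLnontriv : (0 : pLim I hdesc p) ≠ 1 := by
    intro h0
    exact zero_ne_one (α := pLev I p i0) (congrArg (fun g : pLim I hdesc p => g.1 i0) h0)
  haveI : Nontrivial (pLim I hdesc p) := ⟨⟨0, 1, hPLnontriv⟩⟩
  let ψ0 : Ring.DirectLimit (fun x : stalkIndex p => completeLoc I hdesc x.1)
      (fun x y hxy => completeLocMap I hdesc x.1 y.1 hxy) →+* pLim I hdesc p :=
    Ring.DirectLimit.lift _ _ _ (fun x => canMap I hdesc p x.1 x.2)
      (fun x y hxy g => hcan_compat x y hxy g)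
  haveI : Nontrivial (Ring.DirectLimit (fun x : stalkIndex p => completeLoc I hdesc x.1)
      (fun x y hxy => completeLocMap I hdesc x.1 y.1 hxy)) := by
    refine ⟨0, 1, fun h01 => hPLnontriv ?_⟩
    have := congrArg ψ0 h01
    rwa [map_zero, map_one] at this
  have hDL : IsLocalRing (Ring.DirectLimit (fun x : stalkIndex p => completeLoc I hdesc x.1)
      (fun x y hxy => completeLocMap I hdesc x.1 y.1 hxy)) := by
    refine IsLocalRing.of_isUnit_or_isUnit_one_sub_self fun a => ?_
    obtain ⟨⟨x, hx⟩, g, rfl⟩ := Ring.DirectLimit.exists_of a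
    rcases IsLocalRing.isUnit_or_isUnit_one_sub_self (canLev I p x hx i0 (g.1 i0)) with h | h
    · exact Or.inl (key x hx g h)
    · refine Or.inr ?_
      have h2 : IsUnit (canLev I p x hx i0 ((1 - g).1 i0)) := by
        have he : (1 - g).1 i0 = 1 - g.1 i0 := rfl
        rw [he, map_sub, map_one]
        exact h
      have h3 := key x hx (1 - g) h2
      rwa [map_sub, map_one] at h3
  have hPL : IsLocalRing (pLim I hdesc p) := by
    refine IsLocalRing.of_isUnit_or_isUnit_one_sub_self fun g => ?_
    rcases IsLocalRing.isUnit_or_isUnit_one_sub_self (g.1 i0) with h | h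
    · exact Or.inl ((tower_isUnit_iff (pTrans I hdesc p) (pLim I hdesc p)
        (fun _ => Iff.rfl) g).mpr (tower_up (pTrans I hdesc p) g.2 i0 hreflP h))
    · exact Or.inr ((tower_isUnit_iff (pTrans I hdesc p) (pLim I hdesc p)
        (fun _ => Iff.rfl) (1 - g)).mpr (tower_up (pTrans I hdesc p) (1 - g).2 i0 hreflP h))
  refine ⟨hDL, hPL, ?_⟩
  intro ψ hψ
  refine ⟨fun a ha => ?_⟩
  obtain ⟨⟨x, hx⟩, g, rfl⟩ := Ring.DirectLimit.exists_of a
  have h1 : ψ (Ring.DirectLimit.of (fun x : stalkIndex p => completeLoc I hdesc x.1)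
      (fun x y hxy => completeLocMap I hdesc x.1 y.1 hxy) ⟨x, hx⟩ g) =
      canMap I hdesc p x hx g :=
    DFunLike.congr_fun (hψ ⟨x, hx⟩) g
  rw [h1] at ha
  have h2 : IsUnit ((canMap I hdesc p x hx g).1 i0) :=
    ha.map ((Pi.evalRingHom (pLev I p) i0).comp (pLim I hdesc p).subtype)
  exact key x hx g h2
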